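/- arXiv:1212.5888 — 3 statements merged into one kernel-verified Lean document; each statement's English description precedes it below -/
import Mathlib

section
/- If X : [0,T] → ℝ^d is a càdlàg path of finite p-variation for some p ∈ [1,2) and Y : [0,T] → ℝ^d is a càdlàg path of finite p-variation, then the limits over refinements of partitions of the Riemann sums ∑ Y_s (X_t - X_s) and ∑ Y_{s-} (X_t - X_s) (sums over intervals [s,t] of the partition, left endpoint evaluation) are equal whenever they exist. -/
open scoped BigOperators
open MeasureTheory

noncomputable section

def IsPartition (a b : ℝ) (P : Finset ℝ) : Prop :=
  a ∈ P ∧ b ∈ P ∧ ∀ x ∈ P, x ∈ Set.Icc a b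

noncomputable def nextPt (P : Finset ℝ) (b x : ℝ) : ℝ :=
  WithBot.unbotD b (P.filter (fun y => x < y)).min

noncomputable def varSum {E : Type*} [NormedAddCommGroup E] (X : ℝ → E) (p b : ℝ)
    (P : Finset ℝ) : ℝ :=
  ∑ x ∈ P.erase b, ‖X (nextPt P b x) - X x‖ ^ p

def HasFiniteVar {E : Type*} [NormedAddCommGroup E] (X : ℝ → E) (p a b : ℝ) : Prop :=
  ∃ M : ℝ, ∀ P : Finset ℝ, IsPartition a b P → varSum X p b P ≤ M

noncomputable def varNorm {E : Type*} [NormedAddCommGroup E] (X : ℝ → E) (p a b : ℝ) : ℝ :=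
  (sSup {v | ∃ P : Finset ℝ, IsPartition a b P ∧ v = varSum X p b P}) ^ (1 / p)

def Cadlag {E : Type*} [NormedAddCommGroup E] (X : ℝ → E) (a b : ℝ) : Prop :=
  (∀ t ∈ Set.Ico a b, Filter.Tendsto X (nhdsWithin t (Set.Ici t)) (nhds (X t))) ∧
  (∀ t ∈ Set.Ioc a b, ∃ L : E, Filter.Tendsto X (nhdsWithin t (Set.Iio t)) (nhds L))

noncomputable def minus {E : Type*} [NormedAddCommGroup E] (X : ℝ → E) (a t : ℝ) : E :=
  if t ≤ a then X a else Function.leftLim X t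

noncomputable def jump {E : Type*} [NormedAddCommGroup E] (X : ℝ → E) (a t : ℝ) : E :=
  X t - minus X a t

def RRSTendsto {E : Type*} [NormedAddCommGroup E] (a b : ℝ) (S : Finset ℝ → E) (L : E) : Prop :=
  ∀ ε > 0, ∃ P₀ : Finset ℝ, IsPartition a b P₀ ∧
    ∀ P : Finset ℝ, IsPartition a b P → P₀ ⊆ P → ‖S P - L‖ < ε


noncomputable def riemannSum {d : ℕ} (Y X : ℝ → EuclideanSpace ℝ (Fin d)) (b : ℝ)
    (P : Finset ℝ) : Fin d → Fin d → ℝ :=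
  ∑ x ∈ P.erase b, fun i j => Y x i * (X (nextPt P b x) j - X x j)

section Helpers

open Filter Set Topology

variable {E : Type*} [NormedAddCommGroup E]

lemma nextPt_spec {P : Finset ℝ} {b x : ℝ} (h : (P.filter (fun y => x < y)).Nonempty) :
    nextPt P b x ∈ P ∧ x < nextPt P b x ∧ ∀ z ∈ P, x < z → nextPt P b x ≤ z := by
  classical
  have hmin : (P.filter (fun y => x < y)).min
      = ((P.filter (fun y => x < y)).min' h : WithBot ℝ) := (Finset.coe_min' h).symm
  have hn : nextPt P b x = (P.filter (fun y => x < y)).min' h := by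
    rw [nextPt, hmin]; rfl
  have hmem := Finset.min'_mem _ h
  rw [Finset.mem_filter] at hmem
  refine ⟨hn ▸ hmem.1, hn ▸ hmem.2, fun z hz hxz => ?_⟩
  rw [hn]
  exact Finset.min'_le _ _ (Finset.mem_filter.2 ⟨hz, hxz⟩)

lemma nextPt_eq {P : Finset ℝ} {b x y : ℝ} (hy : y ∈ P) (hxy : x < y)
    (hmin : ∀ z ∈ P, x < z → y ≤ z) : nextPt P b x = y := by
  have hne : (P.filter (fun z => x < z)).Nonempty := ⟨y, Finset.mem_filter.2 ⟨hy, hxy⟩⟩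
  obtain ⟨h1, h2, h3⟩ := nextPt_spec (b := b) hne
  exact le_antisymm (h3 y hy hxy) (hmin _ h1 h2)

lemma nextPt_spec_partition {P : Finset ℝ} {T x : ℝ} (hP : IsPartition 0 T P)
    (hx : x ∈ P.erase T) :
    nextPt P T x ∈ P ∧ x < nextPt P T x ∧ ∀ z ∈ P, x < z → nextPt P T x ≤ z := by
  obtain ⟨h0, hTm, hmem⟩ := hP
  have hxP := Finset.mem_of_mem_erase hx
  have hxT : x < T := lt_of_le_of_ne (hmem x hxP).2 (Finset.ne_of_mem_erase hx)
  exact nextPt_spec ⟨T, Finset.mem_filter.2 ⟨hTm, hxT⟩⟩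

lemma incr_le {Z : ℝ → E} {p T M : ℝ} (hT : 0 < T) (hp : 0 < p)
    (hM : ∀ P : Finset ℝ, IsPartition 0 T P → varSum Z p T P ≤ M)
    {s t : ℝ} (hs : 0 ≤ s) (hst : s ≤ t) (ht : t ≤ T) :
    ‖Z t - Z s‖ ≤ max M 0 ^ (1 / p) := by
  rcases eq_or_lt_of_le hst with rfl | hst
  · simp only [sub_self, norm_zero]
    positivity
  · classical
    set Q : Finset ℝ := {0, s, t, T} with hQdef
    have hQ : IsPartition 0 T Q := by
      refine ⟨by simp [hQdef], by simp [hQdef], ?_⟩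
      intro z hz
      simp only [hQdef, Finset.mem_insert, Finset.mem_singleton] at hz
      rcases hz with rfl|rfl|rfl|rfl <;> exact ⟨by linarith, by linarith⟩
    have hnext : nextPt Q T s = t := by
      refine nextPt_eq (by simp [hQdef]) hst ?_
      intro z hz hsz
      simp only [hQdef, Finset.mem_insert, Finset.mem_singleton] at hz
      rcases hz with rfl|rfl|rfl|rfl <;> linarith
    have hsQ : s ∈ Q.erase T := Finset.mem_erase.2 ⟨by linarith, by simp [hQdef]⟩
    have hterm : ‖Z t - Z s‖ ^ p ≤ varSum Z p T Q := by
      rw [varSum]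
      calc ‖Z t - Z s‖ ^ p = ‖Z (nextPt Q T s) - Z s‖ ^ p := by rw [hnext]
        _ ≤ _ := Finset.single_le_sum (f := fun x => ‖Z (nextPt Q T x) - Z x‖ ^ p)
            (fun x _ => Real.rpow_nonneg (norm_nonneg _) p) hsQ
    have h1 : ‖Z t - Z s‖ ^ p ≤ max M 0 :=
      le_trans (le_trans hterm (hM Q hQ)) (le_max_left _ _)
    have h2 : (‖Z t - Z s‖ ^ p) ^ (1/p) ≤ max M 0 ^ (1/p) :=
      Real.rpow_le_rpow (Real.rpow_nonneg (norm_nonneg _) p) h1 (by positivity)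
    calc ‖Z t - Z s‖ = (‖Z t - Z s‖ ^ p) ^ (1/p) := by
          rw [← Real.rpow_mul (norm_nonneg _), mul_one_div, div_self (ne_of_gt hp),
            Real.rpow_one]
      _ ≤ _ := h2

lemma jump_le {Z : ℝ → E} {p T M : ℝ} (hT : 0 < T) (hp : 0 < p)
    (hM : ∀ P : Finset ℝ, IsPartition 0 T P → varSum Z p T P ≤ M)
    (hc : Cadlag Z 0 T) {t : ℝ} (ht0 : 0 ≤ t) (ht : t ≤ T) :
    ‖jump Z 0 t‖ ≤ max M 0 ^ (1 / p) := by
  rcases eq_or_lt_of_le ht0 with rfl | ht0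
  · simp only [jump, minus, if_pos le_rfl, sub_self, norm_zero]
    positivity
  · obtain ⟨L, hL⟩ := hc.2 t ⟨ht0, ht⟩
    have hll : Function.leftLim Z t = L :=
      leftLim_eq_of_tendsto hL
    have hj : jump Z 0 t = Z t - L := by
      rw [jump, minus, if_neg (not_le.2 ht0), hll]
    rw [hj]
    have hev : ∀ᶠ s in 𝓝[<] t, ‖Z t - Z s‖ ≤ max M 0 ^ (1/p) := by
      filter_upwards [Ioo_mem_nhdsLT_of_mem (show t ∈ Set.Ioc 0 t from ⟨ht0, le_refl t⟩)]
        with s hs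
      exact incr_le hT hp hM (le_of_lt hs.1) (le_of_lt hs.2) ht
    have htd : Tendsto (fun s => ‖Z t - Z s‖) (𝓝[<] t) (𝓝 ‖Z t - L‖) :=
      (Filter.Tendsto.const_sub _ hL).norm
    exact le_of_tendsto htd hev

end Helpers

section Dense
open Filter Set Topology
variable {E : Type*} [NormedAddCommGroup E]

set_option maxHeartbeats 2000000 in
lemma exists_small_jump {Z : ℝ → E} {p T M : ℝ} (hT : 0 < T) (hp : 0 < p)
    (hM : ∀ P : Finset ℝ, IsPartition 0 T P → varSum Z p T P ≤ M)
    (hc : Cadlag Z 0 T) {a b : ℝ} (ha : 0 ≤ a) (hab : a < b) (hb : b ≤ T)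
    {η : ℝ} (hη : 0 < η) : ∃ x ∈ Set.Ioo a b, ‖jump Z 0 x‖ < η := by
  classical
  by_contra hcon
  push_neg at hcon
  have hpow : 0 < (η/2) ^ p := Real.rpow_pos_of_pos (by linarith) p
  obtain ⟨n, hn⟩ := exists_nat_gt (max M 0 / ((η/2)^p))
  have hnM : max M 0 < (n : ℝ) * (η/2)^p := by
    rw [div_lt_iff₀ hpow] at hn; linarith
  set h := (b - a) / (n + 2) with hh
  have hh0 : 0 < h := div_pos (by linarith) (by positivity)
  set xp : ℕ → ℝ := fun i => a + (i + 1) * h with hxp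
  have hxmem : ∀ i : ℕ, i < n → xp i ∈ Set.Ioo a b := by
    intro i hi
    constructor
    · have : (0:ℝ) < ((i:ℝ)+1)*h := by positivity
      simp only [hxp]; linarith
    · have h1 : ((i:ℝ)+1) ≤ (n:ℝ) + 1 := by
        have : (i:ℝ) ≤ n := Nat.cast_le.2 (le_of_lt hi)
        linarith
      have h2 : ((i:ℝ)+1) * h ≤ ((n:ℝ)+1) * h := by nlinarith
      have h3 : ((n:ℝ)+1) * h < b - a := by
        have he : ((n:ℝ)+1) * h = (b-a) * (((n:ℝ)+1)/((n:ℝ)+2)) := by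
          rw [hh]; ring
        have hlt : ((n:ℝ)+1)/((n:ℝ)+2) < 1 := by
          rw [div_lt_one (by positivity)]; linarith
        calc ((n:ℝ)+1) * h = (b-a) * (((n:ℝ)+1)/((n:ℝ)+2)) := he
          _ < (b-a) * 1 := by
              apply mul_lt_mul_of_pos_left hlt (by linarith)
          _ = b - a := mul_one _
      simp only [hxp]; linarith
  have hs_ex : ∀ i : ℕ, ∃ s, i < n →
      s ∈ Set.Ioo (a + i * h) (xp i) ∧ η/2 ≤ ‖Z (xp i) - Z s‖ := by
    intro i
    by_cases hi : i < n
    · have hxi := hxmem i hi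
      have hxi0 : 0 < xp i := lt_of_le_of_lt ha hxi.1
      obtain ⟨L, hL⟩ := hc.2 (xp i) ⟨hxi0, le_trans (le_of_lt hxi.2) hb⟩
      have hll : Function.leftLim Z (xp i) = L :=
        leftLim_eq_of_tendsto hL
      have hjump : η ≤ ‖Z (xp i) - L‖ := by
        have hc' := hcon (xp i) hxi
        rwa [jump, minus, if_neg (not_le.2 hxi0), hll] at hc'
      have hev : ∀ᶠ s in 𝓝[<] (xp i), dist (Z s) L < η/2 :=
        Metric.tendsto_nhds.mp hL (η/2) (by linarith)
      have hlo : a + i * h < xp i := by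
        simp only [hxp]; nlinarith
      have hmem2 : Set.Ioo (a + i*h) (xp i) ∈ 𝓝[<] (xp i) :=
        Ioo_mem_nhdsLT_of_mem ⟨hlo, le_refl _⟩
      have hev2 : ∀ᶠ s in 𝓝[<] (xp i), s ∈ Set.Ioo (a + i*h) (xp i) :=
        Filter.eventually_of_mem hmem2 (fun x hx => hx)
      obtain ⟨s, hsd, hsI⟩ := (hev.and hev2).exists
      refine ⟨s, fun _ => ⟨hsI, ?_⟩⟩
      have h1 : ‖Z (xp i) - L‖ - ‖Z s - L‖ ≤ ‖(Z (xp i) - L) - (Z s - L)‖ :=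
        norm_sub_norm_le _ _
      rw [sub_sub_sub_cancel_right] at h1
      rw [dist_eq_norm] at hsd
      linarith
    · exact ⟨0, fun hcon' => absurd hcon' hi⟩
  choose sp hsp using hs_ex
  have hsmem : ∀ i : ℕ, i < n → a + i*h < sp i ∧ sp i < xp i := fun i hi =>
    ⟨((hsp i hi).1).1, ((hsp i hi).1).2⟩
  set Q : Finset ℝ :=
    insert 0 (insert T ((Finset.range n).image xp ∪ (Finset.range n).image sp)) with hQdef
  have hxlt : ∀ i : ℕ, i < n → a < xp i ∧ xp i < b ∧ a < sp i ∧ sp i < b := by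
    intro i hi
    have h1 := hxmem i hi
    have h2 := hsmem i hi
    have h3 : a ≤ a + (i:ℝ)*h := by nlinarith [Nat.cast_nonneg (α := ℝ) i]
    exact ⟨h1.1, h1.2, lt_of_le_of_lt h3 h2.1, lt_trans h2.2 h1.2⟩
  have hQpart : IsPartition 0 T Q := by
    refine ⟨by simp [hQdef], by simp [hQdef], ?_⟩
    intro z hz
    simp only [hQdef, Finset.mem_insert, Finset.mem_union, Finset.mem_image,
      Finset.mem_range] at hz
    rcases hz with rfl | rfl | ⟨i, hi, rfl⟩ | ⟨i, hi, rfl⟩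
    · exact ⟨le_refl _, le_of_lt hT⟩
    · exact ⟨le_of_lt hT, le_refl _⟩
    · have := hxlt i hi; exact ⟨by linarith, by linarith⟩
    · have := hxlt i hi; exact ⟨by linarith, by linarith⟩
  have hnext : ∀ i : ℕ, i < n → nextPt Q T (sp i) = xp i := by
    intro i hi
    have hxiQ : xp i ∈ Q := by
      simp only [hQdef, Finset.mem_insert, Finset.mem_union, Finset.mem_image,
        Finset.mem_range]
      exact Or.inr (Or.inr (Or.inl ⟨i, hi, rfl⟩))
    refine nextPt_eq hxiQ (hsmem i hi).2 ?_
    intro z hz hsz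
    simp only [hQdef, Finset.mem_insert, Finset.mem_union, Finset.mem_image,
      Finset.mem_range] at hz
    rcases hz with rfl | rfl | ⟨j, hj, rfl⟩ | ⟨j, hj, rfl⟩
    · exact absurd hsz (by linarith [(hxlt i hi).2.2.1])
    · exact le_trans (le_of_lt (hxlt i hi).2.1) hb
    · -- z = xp j
      rcases lt_or_ge j i with hji | hij
      · -- xp j = a + (j+1)h ≤ a + i h < sp i, contradiction with sp i < xp j
        exfalso
        have hj1 : ((j:ℝ)+1) ≤ (i:ℝ) := by
          have : (j:ℝ) + 1 ≤ (i:ℝ) := by exact_mod_cast Nat.succ_le_of_lt hji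
          exact this
        have : xp j ≤ a + (i:ℝ)*h := by
          simp only [hxp]; nlinarith
        linarith [(hsmem i hi).1]
      · -- i ≤ j: xp i ≤ xp j
        have : ((i:ℝ)+1)*h ≤ ((j:ℝ)+1)*h := by
          have : (i:ℝ) ≤ (j:ℝ) := Nat.cast_le.2 hij
          nlinarith
        simp only [hxp]; linarith
    · -- z = sp j
      rcases lt_trichotomy j i with hji | rfl | hij
      · exfalso
        have hj1 : ((j:ℝ)+1) ≤ (i:ℝ) := by exact_mod_cast Nat.succ_le_of_lt hji
        have hxj : xp j ≤ a + (i:ℝ)*h := by simp only [hxp]; nlinarith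
        have hjn : j < n := lt_trans hji hi
        have := (hsmem j hjn).2
        have := (hsmem i hi).1
        linarith
      · exact absurd hsz (lt_irrefl _)
      · have hi1 : ((i:ℝ)+1) ≤ (j:ℝ) := by exact_mod_cast Nat.succ_le_of_lt hij
        have : a + (j:ℝ)*h < sp j := (hsmem j hj).1
        have : xp i ≤ a + (j:ℝ)*h := by simp only [hxp]; nlinarith
        linarith [(hsmem j hj).1]
  have hspinj : ∀ i ∈ Finset.range n, ∀ j ∈ Finset.range n, sp i = sp j → i = j := by
    intro i hi j hj heq
    rw [Finset.mem_range] at hi hj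
    by_contra hne
    rcases lt_or_gt_of_ne hne with hij | hji
    · have h1 : ((i:ℝ)+1) ≤ (j:ℝ) := by exact_mod_cast Nat.succ_le_of_lt hij
      have h2 : xp i ≤ a + (j:ℝ)*h := by simp only [hxp]; nlinarith
      have := (hsmem i hi).2
      have := (hsmem j hj).1
      linarith
    · have h1 : ((j:ℝ)+1) ≤ (i:ℝ) := by exact_mod_cast Nat.succ_le_of_lt hji
      have h2 : xp j ≤ a + (i:ℝ)*h := by simp only [hxp]; nlinarith
      have := (hsmem j hj).2
      have := (hsmem i hi).1
      linarith
  have hbound := hM Q hQpart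
  have hlow : (n : ℝ) * (η/2)^p ≤ varSum Z p T Q := by
    rw [varSum]
    have hsub : (Finset.range n).image sp ⊆ Q.erase T := by
      intro z hz
      simp only [Finset.mem_image, Finset.mem_range] at hz
      obtain ⟨i, hi, rfl⟩ := hz
      refine Finset.mem_erase.2 ⟨ne_of_lt (lt_of_lt_of_le (hxlt i hi).2.2.2 hb), ?_⟩
      simp only [hQdef, Finset.mem_insert, Finset.mem_union, Finset.mem_image,
        Finset.mem_range]
      exact Or.inr (Or.inr (Or.inr ⟨i, hi, rfl⟩))
    calc (n:ℝ) * (η/2)^p = ∑ _i ∈ Finset.range n, (η/2)^p := by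
          rw [Finset.sum_const, Finset.card_range, nsmul_eq_mul]
      _ ≤ ∑ i ∈ Finset.range n, ‖Z (nextPt Q T (sp i)) - Z (sp i)‖ ^ p := by
          refine Finset.sum_le_sum ?_
          intro i hi
          rw [Finset.mem_range] at hi
          rw [hnext i hi]
          exact Real.rpow_le_rpow (by linarith) (hsp i hi).2 (le_of_lt hp)
      _ = ∑ z ∈ (Finset.range n).image sp, ‖Z (nextPt Q T z) - Z z‖ ^ p :=
          (Finset.sum_image (f := fun z => ‖Z (nextPt Q T z) - Z z‖ ^ p) hspinj).symm
      _ ≤ ∑ z ∈ Q.erase T, ‖Z (nextPt Q T z) - Z z‖ ^ p :=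
          Finset.sum_le_sum_of_subset_of_nonneg hsub
            (fun z _ _ => Real.rpow_nonneg (norm_nonneg _) p)
  have : (n:ℝ) * (η/2)^p ≤ max M 0 := le_trans hlow (le_trans hbound (le_max_left _ _))
  linarith

end Dense

section Tensor

lemma coord_le_norm {d : ℕ} (v : EuclideanSpace ℝ (Fin d)) (i : Fin d) : ‖v i‖ ≤ ‖v‖ := by
  rw [EuclideanSpace.norm_eq]
  calc ‖v i‖ = Real.sqrt (‖v i‖^2) := (Real.sqrt_sq (norm_nonneg _)).symm
    _ ≤ _ := Real.sqrt_le_sqrt (Finset.single_le_sum (f := fun j => ‖v j‖^2)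
        (fun j _ => sq_nonneg _) (Finset.mem_univ i))

lemma tensor_norm_le {d : ℕ} (A B : EuclideanSpace ℝ (Fin d)) :
    ‖(fun i j => A i * B j : Fin d → Fin d → ℝ)‖ ≤ ‖A‖ * ‖B‖ := by
  rw [pi_norm_le_iff_of_nonneg (by positivity)]
  intro i
  rw [pi_norm_le_iff_of_nonneg (by positivity)]
  intro j
  calc ‖A i * B j‖ = ‖A i‖ * ‖B j‖ := norm_mul _ _
    _ ≤ ‖A‖ * ‖B‖ := mul_le_mul (coord_le_norm A i) (coord_le_norm B j)
        (norm_nonneg _) (norm_nonneg _)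

end Tensor

set_option maxHeartbeats 2000000 in
/-- For càdlàg paths `X, Y : [0,T] → ℝ^d` of finite `p`-variation,
`p ∈ [1,2)`, the refinement-Riemann–Stieltjes limits of the left-point Riemann sums
`∑ Y_s ⊗ (X_t - X_s)` and `∑ Y_{s-} ⊗ (X_t - X_s)` agree whenever both exist. -/
theorem rrs_limits_left_and_leftlimit_agree
    {d : ℕ} (T p : ℝ) (hT : 0 < T) (hp1 : 1 ≤ p) (hp2 : p < 2)
    (X Y : ℝ → EuclideanSpace ℝ (Fin d))
    (hXc : Cadlag X 0 T) (hYc : Cadlag Y 0 T)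
    (hXv : HasFiniteVar X p 0 T) (hYv : HasFiniteVar Y p 0 T)
    (L₁ L₂ : Fin d → Fin d → ℝ)
    (h₁ : RRSTendsto 0 T (fun P => riemannSum Y X T P) L₁)
    (h₂ : RRSTendsto 0 T (fun P => riemannSum (fun t => minus Y 0 t) X T P) L₂) :
    L₁ = L₂ := by
  classical
  obtain ⟨MX, hMX⟩ := hXv
  obtain ⟨MY, hMY⟩ := hYv
  have hp0 : 0 < p := lt_of_lt_of_le one_pos hp1
  set CX := max MX 0 ^ (1/p) with hCXdef
  set CY := max MY 0 ^ (1/p) with hCYdef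
  have hCX0 : 0 ≤ CX := Real.rpow_nonneg (le_max_right _ _) _
  have hCY0 : 0 ≤ CY := Real.rpow_nonneg (le_max_right _ _) _
  by_contra hne
  have hεpos : 0 < ‖L₁ - L₂‖ := by
    rw [norm_pos_iff]
    exact sub_ne_zero.2 hne
  set ε := ‖L₁ - L₂‖ with hεdef
  obtain ⟨P₁, hP₁, hP₁'⟩ := h₁ (ε/3) (by positivity)
  obtain ⟨P₂, hP₂, hP₂'⟩ := h₂ (ε/3) (by positivity)
  set P₀ := P₁ ∪ P₂ with hP₀def
  have hP₀ : IsPartition 0 T P₀ :=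
    ⟨Finset.mem_union_left _ hP₁.1, Finset.mem_union_left _ hP₁.2.1,
      fun x hx => (Finset.mem_union.1 hx).elim (hP₁.2.2 x) (hP₂.2.2 x)⟩
  set E0 := P₀.erase T with hE0def
  set m := (E0.card : ℝ) with hmdef
  have hm0 : 0 ≤ m := Nat.cast_nonneg _
  set δ := ε / (6 * (m+1) * (CY + 1)) with hδdef
  set η := ε / (6 * (m+1) * (CX + 1)) with hηdef
  have hδ : 0 < δ := by
    apply div_pos hεpos
    positivity
  have hη : 0 < η := by
    apply div_pos hεpos
    positivity
  -- choose intermediate points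
  have hg_ex : ∀ x : ℝ, ∃ y, x ∈ E0 →
      x < y ∧ y < nextPt P₀ T x ∧ ‖X y - X x‖ < δ ∧ ‖jump Y 0 y‖ < η := by
    intro x
    by_cases hx : x ∈ E0
    · obtain ⟨hnP, hxn, hnmin⟩ := nextPt_spec_partition hP₀ hx
      have hx0 : 0 ≤ x := (hP₀.2.2 x (Finset.mem_of_mem_erase hx)).1
      have hxT : x < T := lt_of_le_of_ne (hP₀.2.2 x (Finset.mem_of_mem_erase hx)).2
        (Finset.ne_of_mem_erase hx)
      have hnT : nextPt P₀ T x ≤ T := (hP₀.2.2 _ hnP).2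
      have hXcont := hXc.1 x ⟨hx0, hxT⟩
      have hV : {y | ‖X y - X x‖ < δ} ∈ nhdsWithin x (Set.Ici x) := by
        have := hXcont (Metric.ball_mem_nhds (X x) hδ)
        simpa [Metric.ball, dist_eq_norm] using this
      have hV' : {y | ‖X y - X x‖ < δ} ∈ nhdsWithin x (Set.Ioi x) :=
        nhdsWithin_mono x Set.Ioi_subset_Ici_self hV
      obtain ⟨u, hu, huV⟩ := mem_nhdsGT_iff_exists_Ioo_subset.1 hV'
      set c := min u (nextPt P₀ T x) with hcdef
      have hxc : x < c := lt_min hu hxn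
      have hcT : c ≤ T := le_trans (min_le_right _ _) hnT
      obtain ⟨y, hy, hyj⟩ := exists_small_jump hT hp0 hMY hYc hx0 hxc hcT hη
      refine ⟨y, fun _ => ⟨hy.1, lt_of_lt_of_le hy.2 (min_le_right _ _), ?_, hyj⟩⟩
      exact huV ⟨hy.1, lt_of_lt_of_le hy.2 (min_le_left _ _)⟩
    · exact ⟨0, fun hmem => absurd hmem hx⟩
  choose g hg using hg_ex
  set E1 := E0.image g with hE1def
  set P := P₀ ∪ E1 with hPdef
  have hgx : ∀ x ∈ E0, x < g x ∧ g x < nextPt P₀ T x ∧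
      ‖X (g x) - X x‖ < δ ∧ ‖jump Y 0 (g x)‖ < η := fun x hx => hg x hx
  have hg_not_mem : ∀ x ∈ E0, g x ∉ P₀ := by
    intro x hx hmem
    have hspec := nextPt_spec_partition hP₀ hx
    exact absurd (hspec.2.2 _ hmem (hgx x hx).1) (not_le.2 (hgx x hx).2.1)
  have hgT : ∀ x ∈ E0, 0 < g x ∧ g x < T := by
    intro x hx
    have h1 := (hgx x hx).1
    have h2 := (hgx x hx).2.1
    have hx0 : 0 ≤ x := (hP₀.2.2 x (Finset.mem_of_mem_erase hx)).1
    have hnT : nextPt P₀ T x ≤ T := (hP₀.2.2 _ (nextPt_spec_partition hP₀ hx).1).2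
    exact ⟨by linarith, by linarith⟩
  have hPpart : IsPartition 0 T P := by
    refine ⟨Finset.mem_union_left _ hP₀.1, Finset.mem_union_left _ hP₀.2.1, ?_⟩
    intro z hz
    rcases Finset.mem_union.1 hz with hz | hz
    · exact hP₀.2.2 z hz
    · obtain ⟨x, hx, rfl⟩ := Finset.mem_image.1 hz
      have := hgT x hx
      exact ⟨le_of_lt this.1, le_of_lt this.2⟩
  have hsub1 : P₁ ⊆ P := subset_trans Finset.subset_union_left Finset.subset_union_left
  have hsub2 : P₂ ⊆ P := subset_trans Finset.subset_union_right Finset.subset_union_left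
  have hnext1 : ∀ x ∈ E0, nextPt P T x = g x := by
    intro x hx
    refine nextPt_eq (Finset.mem_union_right _ (Finset.mem_image_of_mem g hx))
      (hgx x hx).1 ?_
    intro z hz hxz
    rcases Finset.mem_union.1 hz with hz | hz
    · exact le_trans (le_of_lt (hgx x hx).2.1)
        ((nextPt_spec_partition hP₀ hx).2.2 z hz hxz)
    · obtain ⟨y, hy, rfl⟩ := Finset.mem_image.1 hz
      rcases eq_or_ne y x with rfl | hyx
      · exact le_refl _
      · have hyP₀ := Finset.mem_of_mem_erase hy
        rcases lt_or_gt_of_ne hyx with hlt | hgt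
        · have hle : nextPt P₀ T y ≤ x :=
            (nextPt_spec_partition hP₀ hy).2.2 x (Finset.mem_of_mem_erase hx) hlt
          linarith [(hgx y hy).2.1]
        · have h1 : nextPt P₀ T x ≤ y := (nextPt_spec_partition hP₀ hx).2.2 y hyP₀ hgt
          linarith [(hgx y hy).1, (hgx x hx).2.1]
  have hnext2 : ∀ x ∈ E0, nextPt P T (g x) = nextPt P₀ T x := by
    intro x hx
    refine nextPt_eq (Finset.mem_union_left _ (nextPt_spec_partition hP₀ hx).1)
      (hgx x hx).2.1 ?_
    intro z hz hgz
    rcases Finset.mem_union.1 hz with hz | hz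
    · exact (nextPt_spec_partition hP₀ hx).2.2 z hz (lt_trans (hgx x hx).1 hgz)
    · obtain ⟨y, hy, rfl⟩ := Finset.mem_image.1 hz
      rcases eq_or_ne y x with rfl | hyx
      · exact absurd hgz (lt_irrefl _)
      rcases lt_or_gt_of_ne hyx with hlt | hgt
      · have hle : nextPt P₀ T y ≤ x :=
          (nextPt_spec_partition hP₀ hy).2.2 x (Finset.mem_of_mem_erase hx) hlt
        linarith [(hgx y hy).2.1, (hgx x hx).1]
      · have h1 : nextPt P₀ T x ≤ y :=
          (nextPt_spec_partition hP₀ hx).2.2 y (Finset.mem_of_mem_erase hy) hgt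
        linarith [(hgx y hy).1]
  have hE1T : T ∉ E1 := by
    intro hmem
    obtain ⟨x, hx, hgx'⟩ := Finset.mem_image.1 hmem
    exact absurd hgx' (ne_of_lt (hgT x hx).2)
  have herase : P.erase T = E0 ∪ E1 := by
    rw [hPdef, Finset.erase_union_distrib, Finset.erase_eq_of_notMem hE1T]
  have hdisj : Disjoint E0 E1 := by
    rw [Finset.disjoint_right]
    intro z hz hzE0
    obtain ⟨x, hx, rfl⟩ := Finset.mem_image.1 hz
    exact hg_not_mem x hx (Finset.mem_of_mem_erase hzE0)
  -- the difference of Riemann sums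
  set f : ℝ → Fin d → Fin d → ℝ :=
    fun z => fun i j => jump Y 0 z i * (X (nextPt P T z) j - X z j) with hfdef
  have hdiff : riemannSum Y X T P - riemannSum (fun t => minus Y 0 t) X T P
      = ∑ z ∈ P.erase T, f z := by
    rw [riemannSum, riemannSum, ← Finset.sum_sub_distrib]
    refine Finset.sum_congr rfl ?_
    intro z hz
    funext i j
    show Y z i * (X (nextPt P T z) j - X z j) - minus Y 0 z i * (X (nextPt P T z) j - X z j)
      = jump Y 0 z i * (X (nextPt P T z) j - X z j)
    have : jump Y 0 z i = Y z i - minus Y 0 z i := rfl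
    rw [this]; ring
  -- bounds on individual terms
  have hbound0 : ∀ x ∈ E0, ‖f x‖ ≤ CY * δ := by
    intro x hx
    have hx0 : 0 ≤ x := (hP₀.2.2 x (Finset.mem_of_mem_erase hx)).1
    have hxT : x ≤ T := (hP₀.2.2 x (Finset.mem_of_mem_erase hx)).2
    have h1 : ‖f x‖ ≤ ‖jump Y 0 x‖ * ‖X (nextPt P T x) - X x‖ := by
      have := tensor_norm_le (jump Y 0 x) (X (nextPt P T x) - X x)
      convert this using 2
      simp [hfdef]
    have h2 : ‖jump Y 0 x‖ ≤ CY := jump_le hT hp0 hMY hYc hx0 hxT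
    have h3 : ‖X (nextPt P T x) - X x‖ ≤ δ := by
      rw [hnext1 x hx]
      exact le_of_lt (hgx x hx).2.2.1
    calc ‖f x‖ ≤ ‖jump Y 0 x‖ * ‖X (nextPt P T x) - X x‖ := h1
      _ ≤ CY * δ := mul_le_mul h2 h3 (norm_nonneg _) hCY0
  have hbound1 : ∀ x ∈ E0, ‖f (g x)‖ ≤ η * CX := by
    intro x hx
    have h1 : ‖f (g x)‖ ≤ ‖jump Y 0 (g x)‖ * ‖X (nextPt P T (g x)) - X (g x)‖ := by
      have := tensor_norm_le (jump Y 0 (g x)) (X (nextPt P T (g x)) - X (g x))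
      convert this using 2
      simp [hfdef]
    have h2 : ‖jump Y 0 (g x)‖ ≤ η := le_of_lt (hgx x hx).2.2.2
    have h3 : ‖X (nextPt P T (g x)) - X (g x)‖ ≤ CX := by
      rw [hnext2 x hx]
      have hg0 : 0 ≤ g x := le_of_lt (hgT x hx).1
      have hgn : g x ≤ nextPt P₀ T x := le_of_lt (hgx x hx).2.1
      have hnT : nextPt P₀ T x ≤ T := (hP₀.2.2 _ (nextPt_spec_partition hP₀ hx).1).2
      exact incr_le hT hp0 hMX hg0 hgn hnT
    calc ‖f (g x)‖ ≤ ‖jump Y 0 (g x)‖ * ‖X (nextPt P T (g x)) - X (g x)‖ := h1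
      _ ≤ η * CX := mul_le_mul h2 h3 (norm_nonneg _) (le_of_lt hη)
  have hginj : ∀ x ∈ E0, ∀ y ∈ E0, g x = g y → x = y := by
    intro x hx y hy heq
    by_contra hne'
    rcases lt_or_gt_of_ne hne' with hlt | hgt
    · have h1 : nextPt P₀ T x ≤ y :=
        (nextPt_spec_partition hP₀ hx).2.2 y (Finset.mem_of_mem_erase hy) hlt
      have := (hgx x hx).2.1
      have := (hgx y hy).1
      linarith
    · have h1 : nextPt P₀ T y ≤ x :=
        (nextPt_spec_partition hP₀ hy).2.2 x (Finset.mem_of_mem_erase hx) hgt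
      have := (hgx y hy).2.1
      have := (hgx x hx).1
      linarith
  -- total bound
  have hsumbound : ‖riemannSum Y X T P - riemannSum (fun t => minus Y 0 t) X T P‖
      ≤ m * (CY * δ) + m * (η * CX) := by
    rw [hdiff, herase, Finset.sum_union hdisj]
    calc ‖∑ z ∈ E0, f z + ∑ z ∈ E1, f z‖
        ≤ ‖∑ z ∈ E0, f z‖ + ‖∑ z ∈ E1, f z‖ := norm_add_le _ _
      _ ≤ ∑ z ∈ E0, ‖f z‖ + ∑ z ∈ E1, ‖f z‖ :=
          add_le_add (norm_sum_le _ _) (norm_sum_le _ _)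
      _ ≤ m * (CY * δ) + m * (η * CX) := by
          have hA : ∑ z ∈ E0, ‖f z‖ ≤ m * (CY * δ) := by
            have := Finset.sum_le_card_nsmul E0 (fun z => ‖f z‖) (CY * δ) hbound0
            rwa [nsmul_eq_mul] at this
          have hB : ∑ z ∈ E1, ‖f z‖ ≤ m * (η * CX) := by
            rw [hE1def, Finset.sum_image hginj]
            have := Finset.sum_le_card_nsmul E0 (fun z => ‖f (g z)‖) (η * CX) hbound1
            rwa [nsmul_eq_mul] at this
          exact add_le_add hA hB
  -- the two δ/η smallness facts
  have hkey1 : m * (CY * δ) ≤ ε/6 := by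
    have h1 : m * CY ≤ (m+1) * (CY+1) := by nlinarith
    have h2 : m * (CY * δ) = (m * CY) * δ := by ring
    have h3 : (m * CY) * δ ≤ ((m+1) * (CY+1)) * δ :=
      mul_le_mul_of_nonneg_right h1 (le_of_lt hδ)
    have h4 : ((m+1) * (CY+1)) * δ = ε/6 := by
      rw [hδdef]
      field_simp
    linarith
  have hkey2 : m * (η * CX) ≤ ε/6 := by
    have h1 : m * CX ≤ (m+1) * (CX+1) := by nlinarith
    have h2 : m * (η * CX) = (m * CX) * η := by ring
    have h3 : (m * CX) * η ≤ ((m+1) * (CX+1)) * η :=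
      mul_le_mul_of_nonneg_right h1 (le_of_lt hη)
    have h4 : ((m+1) * (CX+1)) * η = ε/6 := by
      rw [hηdef]
      field_simp
    linarith
  -- conclude
  have hb1 : ‖riemannSum Y X T P - L₁‖ < ε/3 := hP₁' P hPpart hsub1
  have hb2 : ‖riemannSum (fun t => minus Y 0 t) X T P - L₂‖ < ε/3 := hP₂' P hPpart hsub2
  have htri : ε ≤ ‖riemannSum Y X T P - L₁‖
      + ‖riemannSum Y X T P - riemannSum (fun t => minus Y 0 t) X T P‖
      + ‖riemannSum (fun t => minus Y 0 t) X T P - L₂‖ := by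
    have heq : L₁ - L₂ = -(riemannSum Y X T P - L₁)
        + (riemannSum Y X T P - riemannSum (fun t => minus Y 0 t) X T P)
        + (riemannSum (fun t => minus Y 0 t) X T P - L₂) := by abel
    calc ε = ‖L₁ - L₂‖ := rfl
      _ = ‖-(riemannSum Y X T P - L₁)
          + (riemannSum Y X T P - riemannSum (fun t => minus Y 0 t) X T P)
          + (riemannSum (fun t => minus Y 0 t) X T P - L₂)‖ := by rw [← heq]
      _ ≤ ‖-(riemannSum Y X T P - L₁)‖
          + ‖riemannSum Y X T P - riemannSum (fun t => minus Y 0 t) X T P‖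
          + ‖riemannSum (fun t => minus Y 0 t) X T P - L₂‖ := norm_add₃_le
      _ = _ := by rw [norm_neg]
  linarith
end
end

section
/- Let X, Y be càdlàg paths of finite p-variation with p ∈ [1,2), and let ε > 0. Then the sum ∑_{[s,t]∈P} (ΔY_s) 1_{|ΔY_s| ≤ ε} (X_t − X_s) over a partition P is bounded in absolute value by ε^{(2−p)/2} · ‖Y‖_{p-var}^{p/2} · ‖X‖_{2-var}, where ΔY_s = Y_s − Y_{s-}. -/
open scoped BigOperators
open MeasureTheory

noncomputable section

set_option maxHeartbeats 1000000

lemma varSum_nonneg {E : Type*} [NormedAddCommGroup E] (X : ℝ → E) (p b : ℝ) (P : Finset ℝ) :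
    0 ≤ varSum X p b P :=
  Finset.sum_nonneg fun _ _ => Real.rpow_nonneg (norm_nonneg _) p

lemma jump_sum_le {d : ℕ} (T p : ℝ) (hT : 0 < T) (hp1 : 1 ≤ p)
    (Y : ℝ → EuclideanSpace ℝ (Fin d)) (hYc : Cadlag Y 0 T)
    (V : ℝ) (hV : ∀ Q : Finset ℝ, IsPartition 0 T Q → varSum Y p T Q ≤ V)
    (P : Finset ℝ) (hP : IsPartition 0 T P) :
    ∑ x ∈ P.erase T, ‖jump Y 0 x‖ ^ p ≤ V := by
  obtain ⟨h0P, hTP, hmem⟩ := hP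
  set F : Finset ℝ := (P.erase T).filter (fun x => 0 < x) with hF
  -- reduce to F
  have hred : ∑ x ∈ P.erase T, ‖jump Y 0 x‖ ^ p = ∑ x ∈ F, ‖jump Y 0 x‖ ^ p := by
    refine (Finset.sum_subset (Finset.filter_subset _ _) ?_).symm
    intro x hx hnx
    have hx0 : x = 0 := by
      have h1 : 0 ≤ x := (hmem x (Finset.mem_of_mem_erase hx)).1
      have h2 : ¬ (0 < x) := by
        intro h; exact hnx (Finset.mem_filter.mpr ⟨hx, h⟩)
      linarith
    subst hx0
    have : jump Y 0 0 = 0 := by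
      simp [jump, minus]
    rw [this]
    simp only [norm_zero]
    exact Real.zero_rpow (by linarith)
  rw [hred]
  -- facts about F
  have hFmem : ∀ x ∈ F, 0 < x ∧ x ≤ T ∧ x ∈ P ∧ x ≠ T := by
    intro x hx
    rw [hF, Finset.mem_filter, Finset.mem_erase] at hx
    exact ⟨hx.2, (hmem x hx.1.2).2, hx.1.2, hx.1.1⟩
  -- predecessor in P
  set c : ℝ → ℝ := fun x => if h : (P.filter (· < x)).Nonempty then (P.filter (· < x)).max' h else 0
    with hc
  have hcP : ∀ x ∈ F, c x ∈ P ∧ c x < x ∧ ∀ y ∈ P, y < x → y ≤ c x := by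
    intro x hx
    obtain ⟨hx0, hxT, hxP, hxne⟩ := hFmem x hx
    have hne : (P.filter (· < x)).Nonempty := ⟨0, Finset.mem_filter.mpr ⟨h0P, hx0⟩⟩
    have hcx : c x = (P.filter (· < x)).max' hne := by rw [hc]; simp [dif_pos hne]
    have hmm := Finset.max'_mem _ hne
    rw [← hcx] at hmm
    rw [Finset.mem_filter] at hmm
    refine ⟨hmm.1, hmm.2, ?_⟩
    intro y hy hyx
    have := Finset.le_max' (P.filter (· < x)) y (Finset.mem_filter.mpr ⟨hy, hyx⟩)
    rw [← hcx] at this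
    exact this
  have key : ∀ δ : ℝ, 0 < δ → ∑ x ∈ F, ‖jump Y 0 x‖ ^ p ≤ V + δ := by
    intro δ hδ
    set δ' : ℝ := δ / (F.card + 1) with hδ'def
    have hδ' : 0 < δ' := by positivity
    have Hs : ∀ x : ℝ, ∃ s : ℝ, x ∈ F →
        (c x < s ∧ s < x ∧ ‖jump Y 0 x‖ ^ p ≤ ‖Y x - Y s‖ ^ p + δ') := by
      intro x
      by_cases hx : x ∈ F
      · obtain ⟨hx0, hxT, hxP, hxne⟩ := hFmem x hx
        obtain ⟨hcmem, hclt, hcub⟩ := hcP x hx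
        obtain ⟨L, hL⟩ := hYc.2 x ⟨hx0, hxT⟩
        have hminus : minus Y 0 x = L := by
          rw [minus, if_neg (not_le.mpr hx0)]
          exact leftLim_eq_of_tendsto (h := nhdsLT_neBot x) hL
        have hjump : ‖jump Y 0 x‖ ^ p = ‖Y x - L‖ ^ p := by rw [jump, hminus]
        have h3 : Filter.Tendsto (fun s => ‖Y x - Y s‖ ^ p) (nhdsWithin x (Set.Iio x))
            (nhds (‖Y x - L‖ ^ p)) := by
          have h1 : Filter.Tendsto (fun s => Y x - Y s) (nhdsWithin x (Set.Iio x))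
              (nhds (Y x - L)) := Filter.Tendsto.sub tendsto_const_nhds hL
          have h2 := h1.norm
          exact (Real.continuousAt_rpow_const _ p (Or.inr (by linarith))).tendsto.comp h2
        have hev1 : ∀ᶠ u in nhdsWithin x (Set.Iio x),
            |‖Y x - Y u‖ ^ p - ‖Y x - L‖ ^ p| < δ' := by
          have := Metric.tendsto_nhds.mp h3 δ' hδ'
          simpa [Real.dist_eq] using this
        have hev2 : ∀ᶠ u in nhdsWithin x (Set.Iio x), u ∈ Set.Ioo (c x) x :=
          Filter.eventually_of_mem (Ioo_mem_nhdsLT_of_mem ⟨hclt, le_refl x⟩) (fun _ h => h)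
        obtain ⟨u, hu1, hu2⟩ := (hev1.and hev2).exists
        refine ⟨u, fun _ => ⟨hu2.1, hu2.2, ?_⟩⟩
        rw [hjump]
        have := abs_lt.mp hu1
        linarith
      · exact ⟨0, fun h => absurd h hx⟩
    choose s hs using Hs
    have hmono : ∀ x ∈ F, ∀ x' ∈ F, x < x' → s x < s x' := by
      intro x hx x' hx' hlt
      obtain ⟨h1, h2, h3⟩ := hs x hx
      obtain ⟨h1', h2', h3'⟩ := hs x' hx'
      have : x ≤ c x' := (hcP x' hx').2.2 x (hFmem x hx).2.2.1 hlt
      linarith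
    set P' : Finset ℝ := P ∪ F.image s with hP'def
    have hP'part : IsPartition 0 T P' := by
      refine ⟨Finset.mem_union_left _ h0P, Finset.mem_union_left _ hTP, ?_⟩
      intro y hy
      rcases Finset.mem_union.mp hy with h | h
      · exact hmem y h
      · obtain ⟨x, hx, rfl⟩ := Finset.mem_image.mp h
        obtain ⟨h1, h2, _⟩ := hs x hx
        have hc0 : 0 ≤ c x := (hmem _ (hcP x hx).1).1
        have := (hFmem x hx).2.1
        exact ⟨by linarith, by linarith⟩
    have hnext : ∀ x ∈ F, nextPt P' T (s x) = x := by
      intro x hx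
      obtain ⟨hsc, hsx, _⟩ := hs x hx
      have hxP := (hFmem x hx).2.2.1
      have hmin : (P'.filter (fun y => s x < y)).min = (x : WithBot ℝ) := by
        apply le_antisymm
        · exact Finset.min_le (Finset.mem_filter.mpr ⟨Finset.mem_union_left _ hxP, hsx⟩)
        · apply Finset.le_min
          intro y hy
          rw [Finset.mem_filter] at hy
          obtain ⟨hyP', hsy⟩ := hy
          have hxy : x ≤ y := by
            rcases Finset.mem_union.mp hyP' with h | h
            · by_contra hxy
              push_neg at hxy
              have := (hcP x hx).2.2 y h hxy
              linarith
            · obtain ⟨x', hx', rfl⟩ := Finset.mem_image.mp h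
              rcases lt_trichotomy x' x with h1 | h1 | h1
              · have := hmono x' hx' x hx h1
                linarith
              · subst h1; linarith
              · have hxc : x ≤ c x' := (hcP x' hx').2.2 x hxP h1
                have := (hs x' hx').1
                linarith
          exact WithTop.coe_le_coe.mpr hxy
      rw [nextPt, hmin]
      rfl
    have hinj : ∀ a ∈ F, ∀ b ∈ F, s a = s b → a = b := by
      intro a ha b hb hab
      rcases lt_trichotomy a b with h | h | h
      · exact absurd hab (ne_of_lt (hmono a ha b hb h))
      · exact h
      · exact absurd hab.symm (ne_of_lt (hmono b hb a ha h))
    have himg : F.image s ⊆ P'.erase T := by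
      intro y hy
      obtain ⟨x, hx, rfl⟩ := Finset.mem_image.mp hy
      refine Finset.mem_erase.mpr ⟨?_, Finset.mem_union_right _ hy⟩
      obtain ⟨_, h2, _⟩ := hs x hx
      have := (hFmem x hx).2.1
      exact ne_of_lt (by linarith)
    have e1 : ∑ y ∈ F.image s, ‖Y (nextPt P' T y) - Y y‖ ^ p
        = ∑ x ∈ F, ‖Y x - Y (s x)‖ ^ p := by
      rw [Finset.sum_image hinj]
      apply Finset.sum_congr rfl
      intro x hx
      rw [hnext x hx]
    have e2 : ∑ y ∈ F.image s, ‖Y (nextPt P' T y) - Y y‖ ^ p ≤ varSum Y p T P' := by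
      rw [varSum]
      exact Finset.sum_le_sum_of_subset_of_nonneg himg
        (fun _ _ _ => Real.rpow_nonneg (norm_nonneg _) p)
    have e3 : (F.card : ℝ) * δ' ≤ δ := by
      have h1 : (0:ℝ) ≤ (F.card : ℝ) := Nat.cast_nonneg _
      have h2 : ((F.card : ℝ) + 1) ≠ 0 := by positivity
      have h4 : ((F.card : ℝ) + 1) * δ' = δ := by
        rw [hδ'def, mul_comm, div_mul_cancel₀ δ h2]
      nlinarith [hδ'.le]
    calc ∑ x ∈ F, ‖jump Y 0 x‖ ^ p
        ≤ ∑ x ∈ F, (‖Y x - Y (s x)‖ ^ p + δ') :=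
          Finset.sum_le_sum (fun x hx => (hs x hx).2.2)
      _ = (∑ x ∈ F, ‖Y x - Y (s x)‖ ^ p) + F.card * δ' := by
          rw [Finset.sum_add_distrib, Finset.sum_const, nsmul_eq_mul]
      _ ≤ varSum Y p T P' + δ := by
          rw [← e1]
          linarith
      _ ≤ V + δ := by linarith [hV P' hP'part]
  by_contra hcon
  push_neg at hcon
  have := key ((∑ x ∈ F, ‖jump Y 0 x‖ ^ p - V) / 2) (by linarith)
  linarith

lemma abs_coord_le_norm {d : ℕ} (v : EuclideanSpace ℝ (Fin d)) (i : Fin d) : |v i| ≤ ‖v‖ := by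
  rw [EuclideanSpace.norm_eq]
  calc |v i| = Real.sqrt (‖v i‖^2) := by
        rw [Real.norm_eq_abs, Real.sqrt_sq_eq_abs, abs_abs]
  _ ≤ _ := Real.sqrt_le_sqrt (Finset.single_le_sum (f := fun j => ‖v j‖^2)
        (fun j _ => sq_nonneg _) (Finset.mem_univ i))

lemma sum_rpow_le_rpow_sum {ι : Type*} {s : Finset ι} {f : ι → ℝ} (hf : ∀ i ∈ s, 0 ≤ f i)
    {q : ℝ} (hq : 1 ≤ q) : ∑ i ∈ s, f i ^ q ≤ (∑ i ∈ s, f i) ^ q := by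
  have hS : 0 ≤ ∑ i ∈ s, f i := Finset.sum_nonneg hf
  calc ∑ i ∈ s, f i ^ q ≤ ∑ i ∈ s, (∑ j ∈ s, f j) ^ (q-1) * f i := by
        apply Finset.sum_le_sum; intro i hi
        have h1 : f i ^ q = f i ^ (q-1) * f i := by
          rw [show q = (q-1)+1 by ring, Real.rpow_add_of_nonneg (hf i hi) (by linarith) zero_le_one]
          rw [Real.rpow_one]
          ring_nf
        rw [h1]
        exact mul_le_mul_of_nonneg_right
          (Real.rpow_le_rpow (hf i hi) (Finset.single_le_sum hf hi) (by linarith)) (hf i hi)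
  _ = (∑ j ∈ s, f j) ^ (q-1) * (∑ i ∈ s, f i) := by rw [← Finset.mul_sum]
  _ = _ := by
        rw [show q = (q-1)+1 by ring, Real.rpow_add_of_nonneg hS (by linarith) zero_le_one,
          Real.rpow_one]
        ring_nf


/-- For càdlàg `X, Y` of finite `p`-variation, `p ∈ [1,2)`, and `ε > 0`,
the sum `∑_{[s,t]∈P} (ΔY_s) 1_{‖ΔY_s‖ ≤ ε} ⊗ (X_t − X_s)` over any partition `P` of `[0,T]`
is bounded in norm by `ε^((2−p)/2) ‖Y‖_{p-var}^{p/2} ‖X‖_{2-var}`. -/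
theorem small_jump_sum_bound
    {d : ℕ} (T p ε : ℝ) (hT : 0 < T) (hp1 : 1 ≤ p) (hp2 : p < 2) (hε : 0 < ε)
    (X Y : ℝ → EuclideanSpace ℝ (Fin d))
    (hXc : Cadlag X 0 T) (hYc : Cadlag Y 0 T)
    (hXv : HasFiniteVar X p 0 T) (hYv : HasFiniteVar Y p 0 T)
    (P : Finset ℝ) (hP : IsPartition 0 T P) :
    ‖∑ x ∈ P.erase T, (fun i j =>
        (if ‖jump Y 0 x‖ ≤ ε then jump Y 0 x i else 0) *
          (X (nextPt P T x) j - X x j) : Fin d → Fin d → ℝ)‖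
      ≤ ε ^ ((2 - p) / 2) * varNorm Y p 0 T ^ (p / 2) * varNorm X 2 0 T := by
  have hp0 : (0:ℝ) < p := by linarith
  obtain ⟨MY, hMY⟩ := hYv
  obtain ⟨MX, hMX⟩ := hXv
  have hbY : BddAbove {v | ∃ Q : Finset ℝ, IsPartition 0 T Q ∧ v = varSum Y p T Q} :=
    ⟨MY, by rintro v ⟨Q, hQ, rfl⟩; exact hMY Q hQ⟩
  have hbX : BddAbove {v | ∃ Q : Finset ℝ, IsPartition 0 T Q ∧ v = varSum X 2 T Q} := by
    refine ⟨(max MX 0) ^ ((2:ℝ)/p), ?_⟩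
    rintro v ⟨Q, hQ, rfl⟩
    have hv2 : varSum X 2 T Q
        = ∑ x ∈ Q.erase T, (‖X (nextPt Q T x) - X x‖ ^ p) ^ ((2:ℝ)/p) := by
      rw [varSum]
      apply Finset.sum_congr rfl
      intro x _
      rw [← Real.rpow_mul (norm_nonneg _)]
      congr 1
      field_simp
    rw [hv2]
    calc ∑ x ∈ Q.erase T, (‖X (nextPt Q T x) - X x‖ ^ p) ^ ((2:ℝ)/p)
        ≤ (∑ x ∈ Q.erase T, ‖X (nextPt Q T x) - X x‖ ^ p) ^ ((2:ℝ)/p) :=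
          sum_rpow_le_rpow_sum (fun i _ => Real.rpow_nonneg (norm_nonneg _) _)
            (by rw [le_div_iff₀ hp0]; linarith)
      _ ≤ (max MX 0) ^ ((2:ℝ)/p) := by
          apply Real.rpow_le_rpow (varSum_nonneg X p T Q) _ (by positivity)
          exact le_trans (hMX Q hQ) (le_max_left _ _)
  set VY := sSup {v | ∃ Q : Finset ℝ, IsPartition 0 T Q ∧ v = varSum Y p T Q} with hVYdef
  set VX := sSup {v | ∃ Q : Finset ℝ, IsPartition 0 T Q ∧ v = varSum X 2 T Q} with hVXdef
  have hVY0 : 0 ≤ VY := le_trans (varSum_nonneg Y p T P) (le_csSup hbY ⟨P, hP, rfl⟩)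
  have hVX0 : 0 ≤ VX := le_trans (varSum_nonneg X 2 T P) (le_csSup hbX ⟨P, hP, rfl⟩)
  have hjump : ∑ x ∈ P.erase T, ‖jump Y 0 x‖ ^ p ≤ VY :=
    jump_sum_le T p hT hp1 Y hYc VY (fun Q hQ => le_csSup hbY ⟨Q, hQ, rfl⟩) P hP
  set A : ℝ → ℝ := fun x => if ‖jump Y 0 x‖ ≤ ε then ‖jump Y 0 x‖ else 0 with hA
  set B : ℝ → ℝ := fun x => ‖X (nextPt P T x) - X x‖ with hB
  have hA0 : ∀ x, 0 ≤ A x := by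
    intro x; rw [hA]; dsimp only; split
    · exact norm_nonneg _
    · exact le_refl 0
  have hB0 : ∀ x, 0 ≤ B x := fun x => norm_nonneg _
  have step2 : ∀ x ∈ P.erase T, ‖(fun i j => (if ‖jump Y 0 x‖ ≤ ε then jump Y 0 x i else 0) *
      (X (nextPt P T x) j - X x j) : Fin d → Fin d → ℝ)‖ ≤ A x * B x := by
    intro x _
    rw [pi_norm_le_iff_of_nonneg (mul_nonneg (hA0 x) (hB0 x))]
    intro i
    rw [pi_norm_le_iff_of_nonneg (mul_nonneg (hA0 x) (hB0 x))]
    intro j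
    rw [Real.norm_eq_abs, abs_mul]
    have h1 : |if ‖jump Y 0 x‖ ≤ ε then jump Y 0 x i else 0| ≤ A x := by
      rw [hA]; dsimp only; split
      · exact abs_coord_le_norm _ i
      · simp
    have h2 : |X (nextPt P T x) j - X x j| ≤ B x := by
      have := abs_coord_le_norm (X (nextPt P T x) - X x) j
      simpa using this
    exact mul_le_mul h1 h2 (abs_nonneg _) (hA0 x)
  have step3 : ∑ x ∈ P.erase T, A x * B x ≤
      Real.sqrt (∑ x ∈ P.erase T, A x ^ 2) * Real.sqrt (∑ x ∈ P.erase T, B x ^ 2) := by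
    have hcs := Finset.sum_mul_sq_le_sq_mul_sq (P.erase T) A B
    have h0 : 0 ≤ ∑ x ∈ P.erase T, A x * B x :=
      Finset.sum_nonneg fun x _ => mul_nonneg (hA0 x) (hB0 x)
    calc ∑ x ∈ P.erase T, A x * B x = Real.sqrt ((∑ x ∈ P.erase T, A x * B x) ^ 2) := by
          rw [Real.sqrt_sq h0]
      _ ≤ Real.sqrt ((∑ x ∈ P.erase T, A x ^ 2) * (∑ x ∈ P.erase T, B x ^ 2)) :=
          Real.sqrt_le_sqrt hcs
      _ = _ := Real.sqrt_mul (Finset.sum_nonneg fun x _ => sq_nonneg _) _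
  have step4 : ∑ x ∈ P.erase T, A x ^ 2 ≤ ε ^ (2 - p) * VY := by
    have hterm : ∀ x ∈ P.erase T, A x ^ 2 ≤ ε ^ (2-p) * ‖jump Y 0 x‖ ^ p := by
      intro x _
      rw [hA]; dsimp only; split
      · rename_i hle
        have hn : (0:ℝ) ≤ ‖jump Y 0 x‖ := norm_nonneg _
        have e : ‖jump Y 0 x‖ ^ (2:ℕ) = ‖jump Y 0 x‖ ^ ((2:ℝ)) := by
          rw [show ((2:ℝ)) = ((2:ℕ):ℝ) by norm_num, Real.rpow_natCast]
        have key : ‖jump Y 0 x‖ ^ ((2:ℝ)) = ‖jump Y 0 x‖ ^ (2-p) * ‖jump Y 0 x‖ ^ p := by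
          rw [← Real.rpow_add_of_nonneg hn (by linarith) (by linarith)]
          norm_num
        rw [e, key]
        exact mul_le_mul_of_nonneg_right
          (Real.rpow_le_rpow hn hle (by linarith)) (Real.rpow_nonneg hn p)
      · have : (0:ℝ) ≤ ε ^ (2-p) * ‖jump Y 0 x‖ ^ p :=
          mul_nonneg (Real.rpow_nonneg hε.le _) (Real.rpow_nonneg (norm_nonneg _) _)
        simpa using this
    calc ∑ x ∈ P.erase T, A x ^ 2 ≤ ∑ x ∈ P.erase T, ε ^ (2-p) * ‖jump Y 0 x‖ ^ p :=
        Finset.sum_le_sum hterm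
      _ = ε ^ (2-p) * ∑ x ∈ P.erase T, ‖jump Y 0 x‖ ^ p := by rw [Finset.mul_sum]
      _ ≤ ε ^ (2-p) * VY := mul_le_mul_of_nonneg_left hjump (Real.rpow_nonneg hε.le _)
  have step5 : ∑ x ∈ P.erase T, B x ^ 2 ≤ VX := by
    have hEq : ∑ x ∈ P.erase T, B x ^ 2 = varSum X 2 T P := by
      rw [varSum]
      apply Finset.sum_congr rfl
      intro x _
      rw [hB]; dsimp only
      rw [show ((2:ℝ)) = ((2:ℕ):ℝ) by norm_num, Real.rpow_natCast]
    rw [hEq]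
    exact le_csSup hbX ⟨P, hP, rfl⟩
  have hvY : varNorm Y p 0 T = VY ^ ((1:ℝ)/p) := rfl
  have hvX : varNorm X 2 0 T = VX ^ ((1:ℝ)/2) := rfl
  have hRHS : ε ^ ((2 - p) / 2) * varNorm Y p 0 T ^ (p / 2) * varNorm X 2 0 T
      = Real.sqrt (ε ^ (2-p) * VY) * Real.sqrt VX := by
    rw [hvY, hvX, Real.sqrt_mul (Real.rpow_nonneg hε.le _)]
    simp only [Real.sqrt_eq_rpow]
    have e1 : (ε ^ (2-p)) ^ ((1:ℝ)/2) = ε ^ ((2-p)/2) := by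
      rw [← Real.rpow_mul hε.le]; congr 1; ring
    have e2 : (VY ^ ((1:ℝ)/p)) ^ (p/2) = VY ^ ((1:ℝ)/2) := by
      rw [← Real.rpow_mul hVY0]; congr 1; field_simp
    rw [e1, e2]
  calc ‖∑ x ∈ P.erase T, (fun i j =>
        (if ‖jump Y 0 x‖ ≤ ε then jump Y 0 x i else 0) *
          (X (nextPt P T x) j - X x j) : Fin d → Fin d → ℝ)‖
      ≤ ∑ x ∈ P.erase T, ‖(fun i j =>
        (if ‖jump Y 0 x‖ ≤ ε then jump Y 0 x i else 0) *
          (X (nextPt P T x) j - X x j) : Fin d → Fin d → ℝ)‖ := norm_sum_le _ _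
    _ ≤ ∑ x ∈ P.erase T, A x * B x := Finset.sum_le_sum step2
    _ ≤ Real.sqrt (∑ x ∈ P.erase T, A x ^ 2) * Real.sqrt (∑ x ∈ P.erase T, B x ^ 2) := step3
    _ ≤ Real.sqrt (ε ^ (2-p) * VY) * Real.sqrt VX :=
        mul_le_mul (Real.sqrt_le_sqrt step4) (Real.sqrt_le_sqrt step5)
          (Real.sqrt_nonneg _) (Real.sqrt_nonneg _)
    _ = _ := hRHS.symm
end
end

section
/- Let ω be a nonnegative superadditive function on subintervals of [s,t], and let P be a partition of [s,t] into r ≥ 2 intervals. Then there exist three consecutive partition points u₋ < u < u₊ in P such that ω[u₋, u₊] ≤ 2/(r−1) · ω[s,t]. -/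
noncomputable section

/-- `ω` is superadditive on subintervals of `[a,b]`. -/
def SuperadditiveOn (ω : ℝ → ℝ → ℝ) (a b : ℝ) : Prop :=
  ∀ s u t : ℝ, a ≤ s → s ≤ u → u ≤ t → t ≤ b → ω s u + ω u t ≤ ω s t

private lemma step_mono_aux (v : ℕ → ℝ) :
    ∀ n, (∀ i, i < n → v i ≤ v (i+1)) → v 0 ≤ v n := by
  intro n
  induction n with
  | zero => intro _; exact le_rfl
  | succ n ih =>
    intro h
    exact le_trans (ih fun i hi => h i (by omega)) (h n (by omega))

private lemma embed_le (s t : ℝ) (ω : ℝ → ℝ → ℝ)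
    (hnn : ∀ a b : ℝ, s ≤ a → a ≤ b → b ≤ t → 0 ≤ ω a b)
    (hω : SuperadditiveOn ω s t)
    (a b : ℝ) (ha : s ≤ a) (hab : a ≤ b) (hb : b ≤ t) : ω a b ≤ ω s t := by
  have h1 := hω s a b le_rfl ha hab hb
  have h2 := hω s b t le_rfl (ha.trans hab) hb le_rfl
  have h3 := hnn s a le_rfl ha (hab.trans hb)
  have h4 := hnn b t (ha.trans hab) hb le_rfl
  linarith

private lemma chain_sum_le (s t : ℝ) (ω : ℝ → ℝ → ℝ)
    (hnn : ∀ a b : ℝ, s ≤ a → a ≤ b → b ≤ t → 0 ≤ ω a b)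
    (hω : SuperadditiveOn ω s t) (v : ℕ → ℝ) :
    ∀ n, (∀ i, i ≤ n → s ≤ v i) → (∀ i, i ≤ n → v i ≤ t) →
      (∀ i, i < n → v i ≤ v (i+1)) →
      ∑ i ∈ Finset.range n, ω (v i) (v (i+1)) ≤ ω (v 0) (v n) := by
  intro n
  induction n with
  | zero =>
    intro h1 h2 _
    simpa using hnn (v 0) (v 0) (h1 0 le_rfl) le_rfl (h2 0 le_rfl)
  | succ n ih =>
    intro h1 h2 h3
    rw [Finset.sum_range_succ]
    have h0n : v 0 ≤ v n := step_mono_aux v n (fun i hi => h3 i (by omega))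
    have hih := ih (fun i hi => h1 i (by omega)) (fun i hi => h2 i (by omega))
      (fun i hi => h3 i (by omega))
    have hs := hω (v 0) (v n) (v (n+1)) (h1 0 (by omega)) h0n (h3 n (by omega))
      (h2 (n+1) le_rfl)
    linarith

/-- If `ω` is nonnegative and superadditive on subintervals of `[s,t]` and
`u : Fin (r+1) → ℝ` is a partition of `[s,t]` into `r ≥ 2` intervals, then there are three
consecutive partition points `u_k < u_{k+1} < u_{k+2}` with
`ω (u_k) (u_{k+2}) ≤ 2/(r−1) · ω s t`. -/
theorem superadditive_small_consecutive_pair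
    (s t : ℝ) (hst : s ≤ t) (ω : ℝ → ℝ → ℝ)
    (hnn : ∀ a b : ℝ, s ≤ a → a ≤ b → b ≤ t → 0 ≤ ω a b)
    (hω : SuperadditiveOn ω s t)
    (r : ℕ) (hr : 2 ≤ r) (u : Fin (r + 1) → ℝ)
    (hmono : StrictMono u) (h0 : u 0 = s) (hlast : u (Fin.last r) = t) :
    ∃ k : ℕ, ∃ hk : k + 2 ≤ r,
      ω (u ⟨k, by omega⟩) (u ⟨k + 2, by omega⟩) ≤ 2 / (r - 1 : ℝ) * ω s t := by
  by_contra hcon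
  push_neg at hcon
  set c : ℝ := 2 / (r - 1 : ℝ) * ω s t with hc
  have hωst : 0 ≤ ω s t := hnn s t le_rfl hst le_rfl
  -- padded version of u on ℕ
  set U : ℕ → ℝ := fun i => u ⟨min i r, by omega⟩ with hU
  have hUs : ∀ i, s ≤ U i := by
    intro i
    rw [← h0]
    exact hmono.monotone (by simp [Fin.le_def])
  have hUt : ∀ i, U i ≤ t := by
    intro i
    rw [← hlast]
    exact hmono.monotone (by simp [Fin.le_def])
  have hUmono : ∀ i j : ℕ, i ≤ j → U i ≤ U j := by
    intro i j hij
    exact hmono.monotone (by simp [Fin.le_def]; omega)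
  have hUeq : ∀ i (hi : i ≤ r), U i = u ⟨i, by omega⟩ := by
    intro i hi
    simp [hU, Nat.min_eq_left hi]
  -- even chain
  have hevenchain := chain_sum_le s t ω hnn hω (fun j => U (2*j)) (r/2)
    (fun i _ => hUs _) (fun i _ => hUt _) (fun i _ => hUmono _ _ (by omega))
  have heven_le : ∑ j ∈ Finset.range (r/2), ω (U (2*j)) (U (2*(j+1))) ≤ ω s t :=
    hevenchain.trans (embed_le s t ω hnn hω _ _ (hUs 0) (hUmono _ _ (by omega)) (hUt _))
  -- odd chain
  have hoddchain := chain_sum_le s t ω hnn hω (fun j => U (2*j+1)) ((r-1)/2)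
    (fun i _ => hUs _) (fun i _ => hUt _) (fun i _ => hUmono _ _ (by omega))
  have hodd_le : ∑ j ∈ Finset.range ((r-1)/2), ω (U (2*j+1)) (U (2*(j+1)+1)) ≤ ω s t :=
    hoddchain.trans (embed_le s t ω hnn hω _ _ (hUs 1) (hUmono _ _ (by omega)) (hUt _))
  -- per-term lower bounds
  have heventerm : ∀ j ∈ Finset.range (r/2), c < ω (U (2*j)) (U (2*(j+1))) := by
    intro j hj
    rw [Finset.mem_range] at hj
    have hk : 2*j + 2 ≤ r := by omega
    have e : 2*(j+1) = 2*j + 2 := by ring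
    rw [e, hUeq (2*j) (by omega), hUeq (2*j+2) (by omega)]
    exact hcon (2*j) hk
  have hoddterm : ∀ j ∈ Finset.range ((r-1)/2), c < ω (U (2*j+1)) (U (2*(j+1)+1)) := by
    intro j hj
    rw [Finset.mem_range] at hj
    have hk : (2*j+1) + 2 ≤ r := by omega
    have e : 2*(j+1)+1 = (2*j+1) + 2 := by ring
    rw [e, hUeq (2*j+1) (by omega), hUeq ((2*j+1)+2) (by omega)]
    exact hcon (2*j+1) hk
  -- sum bounds
  have h1 : ((r/2 : ℕ) : ℝ) * c < ∑ j ∈ Finset.range (r/2), ω (U (2*j)) (U (2*(j+1))) := by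
    have hne : (Finset.range (r/2)).Nonempty := by
      rw [Finset.nonempty_range_iff]; omega
    have := Finset.sum_lt_sum_of_nonempty hne heventerm
    simpa [mul_comm] using this
  have h2 : (((r-1)/2 : ℕ) : ℝ) * c ≤
      ∑ j ∈ Finset.range ((r-1)/2), ω (U (2*j+1)) (U (2*(j+1)+1)) := by
    have := Finset.sum_le_sum (fun j hj => (hoddterm j hj).le)
    simpa [mul_comm] using this
  have hcount : ((r/2 : ℕ) : ℝ) + (((r-1)/2 : ℕ) : ℝ) = (r : ℝ) - 1 := by
    have h : (r/2 + (r-1)/2 : ℕ) = r - 1 := by omega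
    rw [← Nat.cast_add, h, Nat.cast_sub (by omega)]
    norm_num
  have hr1 : (r : ℝ) - 1 ≠ 0 := by
    have : (2 : ℝ) ≤ (r : ℝ) := by exact_mod_cast hr
    linarith
  have hcval : ((r : ℝ) - 1) * c = 2 * ω s t := by
    rw [hc]; field_simp
  have hsum : ((r/2 : ℕ) : ℝ) * c + (((r-1)/2 : ℕ) : ℝ) * c = 2 * ω s t := by
    rw [← add_mul, hcount, hcval]
  linarith
end
end
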